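/- Every graph in the family F_2 is 4-χρ-vertex-critical; that is, for every l with l = 0 or l ≡ 2 (mod 4), the graph G obtained from a disjoint triangle and a path on three vertices by joining a vertex of the triangle to the middle vertex of the path by a path with exactly l internal vertices satisfies χρ(G) = 4 and χρ(G − v) < 4 for every vertex v. -/

import Mathlib

open SimpleGraph

/-- A `k`-packing coloring of `G`: colors in `{1,…,k}` and distinct vertices of equal color `i`
are at (extended, shortest-path) distance greater than `i`. -/
def IsPackingColoring {V : Type*} (G : SimpleGraph V) (k : ℕ) (c : V → ℕ) : Prop :=
  (∀ v, 1 ≤ c v ∧ c v ≤ k) ∧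
    ∀ u v : V, u ≠ v → c u = c v → (c u : ℕ∞) < G.edist u v

/-- The packing chromatic number of `G`: the least `k` admitting a `k`-packing coloring. -/
noncomputable def packingChromaticNumber {V : Type*} (G : SimpleGraph V) : ℕ :=
  sInf {k | ∃ c : V → ℕ, IsPackingColoring G k c}

/-- `G` is `4`-`χρ`-vertex-critical: `χρ(G) = 4` and deleting any vertex drops `χρ` below `4`. -/
def FourVertexCritical {V : Type*} (G : SimpleGraph V) : Prop :=
  packingChromaticNumber G = 4 ∧
    ∀ v : V, packingChromaticNumber (G.induce ({v}ᶜ : Set V)) < 4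

/-- `G` contains a (not necessarily induced) subgraph isomorphic to `H`. -/
def HasCopy {W V : Type*} (H : SimpleGraph W) (G : SimpleGraph V) : Prop :=
  ∃ f : H →g G, Function.Injective f

/-- The cycle on `n` vertices (for `n ≥ 3`). -/
def CycGraph (n : ℕ) : SimpleGraph (Fin n) :=
  SimpleGraph.fromRel (fun i j => (i.val + 1) % n = j.val)

/-- A member of the family `𝓕₁`: two triangles `{0,1,2}` and `{l+3,l+4,l+5}` joined by a
path from `u = 2` to `v = l+3` with `l` internal vertices `3,…,l+2`. -/
def F1Graph (l : ℕ) : SimpleGraph (Fin (l + 6)) :=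
  SimpleGraph.fromRel (fun i j =>
    j.val = i.val + 1 ∨ (i.val = 0 ∧ j.val = 2) ∨ (i.val = l + 3 ∧ j.val = l + 5))

/-- A member of the family `𝓕₂`: a triangle `{0,1,2}` joined by a path from `u = 2` to
`v = l+3` with `l` internal vertices `3,…,l+2`, where `v` is the middle vertex of the path
`(l+4)-(l+3)-(l+5)`. -/
def F2Graph (l : ℕ) : SimpleGraph (Fin (l + 6)) :=
  SimpleGraph.fromRel (fun i j =>
    (j.val = i.val + 1 ∧ j.val ≤ l + 4) ∨ (i.val = 0 ∧ j.val = 2) ∨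
      (i.val = l + 3 ∧ j.val = l + 5))

/-- A member of the family `𝓕₃`: `A` is the path `0-1-2-3` (plus the edge `0-3` if
`c4 = true`, making it a 4-cycle) with non-pendant vertex `u = 2`, joined by a path with `l`
internal vertices `4,…,l+3` to the vertex `v = l+4` of the triangle `{l+4,l+5,l+6}`. -/
def F3Graph (c4 : Bool) (l : ℕ) : SimpleGraph (Fin (l + 7)) :=
  SimpleGraph.fromRel (fun i j =>
    (j.val = i.val + 1 ∧ i.val ≠ 3) ∨ (i.val = 2 ∧ j.val = 4) ∨
      (c4 = true ∧ i.val = 0 ∧ j.val = 3) ∨ (i.val = l + 4 ∧ j.val = l + 6))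

/-- A member of the family `𝓕₄`: paths `u₁(0)-u(1)-u₂(l+5+l')` and
`z₁(l+4+l')-z(l+3+l')-z₂(l+7+l')`, an edge `v(l+2)-v₁(l+6+l')`, with `u` joined to `v` by a
path through internal vertices `y₁(2),…,y_l(l+1)` and `v` joined to `z` by a path through
internal vertices `w₁(l+3),…,w_{l'}(l+2+l')`; if `e = 1` the extra edge `v₁ y_{l-1}` is
present, and if `e = 2` the extra edge `v₁ w₂` is present. -/
def F4Graph (l l' : ℕ) (e : Fin 3) : SimpleGraph (Fin (l + l' + 8)) :=
  SimpleGraph.fromRel (fun i j =>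
    (j.val = i.val + 1 ∧ j.val ≤ l + 4 + l') ∨ (i.val = 1 ∧ j.val = l + 5 + l') ∨
      (i.val = l + 2 ∧ j.val = l + 6 + l') ∨ (i.val = l + 3 + l' ∧ j.val = l + 7 + l') ∨
      (e = 1 ∧ i.val = l ∧ j.val = l + 6 + l') ∨
      (e = 2 ∧ i.val = l + 4 ∧ j.val = l + 6 + l'))

/-- A member of the family `𝓕₅`: `A` is the path `0-1-2-3` (plus edge `0-3` if `ac4 = true`)
with non-pendant vertex `u = 2`, `B` is the path `(l+5)-(l+4)-(l+6)-(l+7)` (plus edge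
`(l+5)-(l+7)` if `bc4 = true`) with non-pendant vertex `v = l+4`, and `u` is joined to `v`
by a path with `l` internal vertices `4,…,l+3`. -/
def F5Graph (ac4 bc4 : Bool) (l : ℕ) : SimpleGraph (Fin (l + 8)) :=
  SimpleGraph.fromRel (fun i j =>
    (j.val = i.val + 1 ∧ i.val ≠ 3 ∧ i.val ≠ l + 5) ∨ (i.val = 2 ∧ j.val = 4) ∨
      (i.val = l + 4 ∧ j.val = l + 6) ∨ (ac4 = true ∧ i.val = 0 ∧ j.val = 3) ∨
      (bc4 = true ∧ i.val = l + 5 ∧ j.val = l + 7))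

section aux
variable {V : Type*} {G : SimpleGraph V}

lemma abs_sub_le_walk_length (φ : V → ℤ)
    (hφ : ∀ a b, G.Adj a b → |φ a - φ b| ≤ 1) {u v : V} (w : G.Walk u v) :
    |φ u - φ v| ≤ (w.length : ℤ) := by
  induction w with
  | nil => simp
  | @cons a b c h p ih =>
      have h1 := hφ _ _ h
      calc |φ a - φ c| ≤ |φ a - φ b| + |φ b - φ c| := abs_sub_le _ _ _
        _ ≤ 1 + p.length := add_le_add h1 ih
        _ = ((p.length + 1 : ℕ) : ℤ) := by push_cast; ring
        _ = _ := by simp [Walk.length_cons]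

lemma le_edist_of_lipschitz (φ : V → ℤ)
    (hφ : ∀ a b, G.Adj a b → |φ a - φ b| ≤ 1) (u v : V) (m : ℕ)
    (hm : (m : ℤ) ≤ |φ u - φ v|) : (m : ℕ∞) ≤ G.edist u v := by
  refine le_iInf fun w => ?_
  have := le_trans hm (abs_sub_le_walk_length φ hφ w)
  exact_mod_cast this

lemma two_le_edist_of_not_adj {u v : V} (hne : u ≠ v) (hna : ¬ G.Adj u v) :
    2 ≤ G.edist u v := by
  have h0 : G.edist u v ≠ 0 := by simp [edist_eq_zero_iff, hne]
  have h1 : G.edist u v ≠ 1 := by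
    intro h; exact hna (edist_eq_one_iff_adj.mp h)
  rcases eq_or_ne (G.edist u v) ⊤ with h | h
  · simp [h]
  · lift G.edist u v to ℕ using h with n hn
    have : n ≠ 0 := by simpa using h0
    have : n ≠ 1 := by exact_mod_cast h1
    exact_mod_cast by omega

lemma edist_le_induce (s : Set V) (u v : s) :
    G.edist u.val v.val ≤ (G.induce s).edist u v := by
  refine le_iInf fun w => ?_
  have := edist_le (w.map (Embedding.induce s).toHom)
  rw [Walk.length_map] at this
  exact this

end aux

namespace F2
variable {l : ℕ}

lemma adj (a b : ℕ) (ha : a < l + 6) (hb : b < l + 6)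
    (h : (b = a + 1 ∧ b ≤ l + 4) ∨ (a = b + 1 ∧ a ≤ l + 4) ∨ (a = 0 ∧ b = 2) ∨
      (b = 0 ∧ a = 2) ∨ (a = l + 3 ∧ b = l + 5) ∨ (b = l + 3 ∧ a = l + 5)) :
    (F2Graph l).Adj ⟨a, ha⟩ ⟨b, hb⟩ := by
  rw [F2Graph, fromRel_adj]
  refine ⟨?_, ?_⟩
  · simp only [ne_eq, Fin.mk.injEq]; omega
  · simp only []; omega

lemma not_adj (a b : ℕ) (ha : a < l + 6) (hb : b < l + 6)
    (hgap : a + 2 ≤ b ∨ b + 2 ≤ a)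
    (h02 : ¬(a = 0 ∧ b = 2) ∧ ¬(b = 0 ∧ a = 2))
    (h35 : ¬(a = l + 3 ∧ b = l + 5) ∧ ¬(b = l + 3 ∧ a = l + 5)) :
    ¬ (F2Graph l).Adj ⟨a, ha⟩ ⟨b, hb⟩ := by
  rw [F2Graph, fromRel_adj]
  rintro ⟨-, h⟩
  simp only [] at h
  omega

lemma edist_path (a b : ℕ) (ha : a < l + 6) (hb : b < l + 6)
    (hab : a ≤ b) (hb4 : b ≤ l + 4) :
    (F2Graph l).edist ⟨a, ha⟩ ⟨b, hb⟩ ≤ (b - a : ℕ) := by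
  obtain ⟨k, rfl⟩ : ∃ k, b = a + k := ⟨b - a, by omega⟩
  clear hab
  induction k with
  | zero => simp [edist_self]
  | succ n ih =>
      have hn : a + n < l + 6 := by omega
      have h1 : (F2Graph l).Adj (⟨a + n, hn⟩ : Fin (l+6)) ⟨a + (n+1), hb⟩ :=
        adj _ _ _ _ (by omega)
      calc (F2Graph l).edist ⟨a, ha⟩ ⟨a + (n+1), hb⟩
          ≤ (F2Graph l).edist ⟨a, ha⟩ ⟨a + n, hn⟩ +
            (F2Graph l).edist ⟨a + n, hn⟩ ⟨a + (n+1), hb⟩ := SimpleGraph.edist_triangle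
        _ ≤ (a + n - a : ℕ) + 1 := by
            exact add_le_add (ih hn (by omega)) (le_of_eq (edist_eq_one_iff_adj.mpr h1))
        _ ≤ _ := by
            rw [show (a + (n+1) - a : ℕ) = n + 1 by omega, show (a + n - a : ℕ) = n by omega]
            push_cast
            exact le_refl _

end F2

namespace F2X
open F2
variable {l : ℕ}

lemma edist_le_of (a b k : ℕ) (ha : a < l + 6) (hb : b < l + 6)
    (h : (a ≤ b ∧ b ≤ a + k ∧ b ≤ l + 4) ∨ (b ≤ a ∧ a ≤ b + k ∧ a ≤ l + 4) ∨
      (a = 0 ∧ 2 ≤ b ∧ b ≤ l + 4 ∧ b ≤ k + 1) ∨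
      (b = 0 ∧ 2 ≤ a ∧ a ≤ l + 4 ∧ a ≤ k + 1) ∨
      (b = l + 5 ∧ a ≤ l + 4 ∧ (l + 3 - a) + (a - (l + 3)) + 1 ≤ k) ∨
      (a = l + 5 ∧ b ≤ l + 4 ∧ (l + 3 - b) + (b - (l + 3)) + 1 ≤ k)) :
    (F2Graph l).edist ⟨a, ha⟩ ⟨b, hb⟩ ≤ k := by
  have path : ∀ (a b : ℕ) (ha : a < l + 6) (hb : b < l + 6), a ≤ b → b ≤ l + 4 →
      b ≤ a + k → (F2Graph l).edist ⟨a, ha⟩ ⟨b, hb⟩ ≤ k := by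
    intro a b ha hb h1 h2 h3
    calc (F2Graph l).edist ⟨a, ha⟩ ⟨b, hb⟩ ≤ (b - a : ℕ) := edist_path a b ha hb h1 h2
      _ ≤ k := by exact_mod_cast Nat.le_of_lt_succ (by omega)
  rcases h with ⟨h1, h2, h3⟩ | ⟨h1, h2, h3⟩ | ⟨rfl, h2, h3, h4⟩ | ⟨rfl, h2, h3, h4⟩ |
    ⟨rfl, h2, h3⟩ | ⟨rfl, h2, h3⟩
  · exact path a b ha hb h1 h3 h2
  · rw [SimpleGraph.edist_comm]; exact path b a hb ha h1 h3 h2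
  · -- a = 0, go through the edge 0-2
    have h2' : (2:ℕ) < l + 6 := by omega
    calc (F2Graph l).edist ⟨0, ha⟩ ⟨b, hb⟩
        ≤ (F2Graph l).edist ⟨0, ha⟩ ⟨2, h2'⟩ + (F2Graph l).edist ⟨2, h2'⟩ ⟨b, hb⟩ :=
          SimpleGraph.edist_triangle
      _ ≤ 1 + (b - 2 : ℕ) := add_le_add
          (le_of_eq (edist_eq_one_iff_adj.mpr (adj _ _ _ _ (by omega))))
          (edist_path 2 b h2' hb h2 h3)
      _ ≤ k := by exact_mod_cast (by omega : 1 + (b - 2) ≤ k)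
  · rw [SimpleGraph.edist_comm]
    have h2' : (2:ℕ) < l + 6 := by omega
    calc (F2Graph l).edist ⟨0, hb⟩ ⟨a, ha⟩
        ≤ (F2Graph l).edist ⟨0, hb⟩ ⟨2, h2'⟩ + (F2Graph l).edist ⟨2, h2'⟩ ⟨a, ha⟩ :=
          SimpleGraph.edist_triangle
      _ ≤ 1 + (a - 2 : ℕ) := add_le_add
          (le_of_eq (edist_eq_one_iff_adj.mpr (adj _ _ _ _ (by omega))))
          (edist_path 2 a h2' ha h2 h3)
      _ ≤ k := by exact_mod_cast (by omega : 1 + (a - 2) ≤ k)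
  · -- b = l + 5, go through l + 3
    have h3' : l + 3 < l + 6 := by omega
    have hd : (F2Graph l).edist ⟨a, ha⟩ ⟨l+3, h3'⟩ ≤ ((l + 3 - a) + (a - (l+3)) : ℕ) := by
      rcases le_total a (l+3) with hle | hle
      · calc (F2Graph l).edist ⟨a, ha⟩ ⟨l+3, h3'⟩ ≤ ((l+3) - a : ℕ) :=
            edist_path a (l+3) ha h3' hle (by omega)
          _ ≤ _ := by exact_mod_cast (by omega : (l + 3 - a) ≤ (l + 3 - a) + (a - (l+3)))
      · rw [SimpleGraph.edist_comm]
        calc (F2Graph l).edist ⟨l+3, h3'⟩ ⟨a, ha⟩ ≤ (a - (l+3) : ℕ) :=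
            edist_path (l+3) a h3' ha hle h2
          _ ≤ _ := by exact_mod_cast (by omega : (a - (l+3)) ≤ (l + 3 - a) + (a - (l+3)))
    calc (F2Graph l).edist ⟨a, ha⟩ ⟨l+5, hb⟩
        ≤ (F2Graph l).edist ⟨a, ha⟩ ⟨l+3, h3'⟩ + (F2Graph l).edist ⟨l+3, h3'⟩ ⟨l+5, hb⟩ :=
          SimpleGraph.edist_triangle
      _ ≤ ((l + 3 - a) + (a - (l+3)) : ℕ) + 1 := add_le_add hd
          (le_of_eq (edist_eq_one_iff_adj.mpr (adj _ _ _ _ (by omega))))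
      _ ≤ k := by exact_mod_cast (by omega : (l + 3 - a) + (a - (l+3)) + 1 ≤ k)
  · rw [SimpleGraph.edist_comm]
    have h3' : l + 3 < l + 6 := by omega
    have hd : (F2Graph l).edist ⟨b, hb⟩ ⟨l+3, h3'⟩ ≤ ((l + 3 - b) + (b - (l+3)) : ℕ) := by
      rcases le_total b (l+3) with hle | hle
      · calc (F2Graph l).edist ⟨b, hb⟩ ⟨l+3, h3'⟩ ≤ ((l+3) - b : ℕ) :=
            edist_path b (l+3) hb h3' hle (by omega)
          _ ≤ _ := by exact_mod_cast (by omega : (l + 3 - b) ≤ (l + 3 - b) + (b - (l+3)))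
      · rw [SimpleGraph.edist_comm]
        calc (F2Graph l).edist ⟨l+3, h3'⟩ ⟨b, hb⟩ ≤ (b - (l+3) : ℕ) :=
            edist_path (l+3) b h3' hb hle h2
          _ ≤ _ := by exact_mod_cast (by omega : (b - (l+3)) ≤ (l + 3 - b) + (b - (l+3)))
    calc (F2Graph l).edist ⟨b, hb⟩ ⟨l+5, ha⟩
        ≤ (F2Graph l).edist ⟨b, hb⟩ ⟨l+3, h3'⟩ + (F2Graph l).edist ⟨l+3, h3'⟩ ⟨l+5, ha⟩ :=
          SimpleGraph.edist_triangle
      _ ≤ ((l + 3 - b) + (b - (l+3)) : ℕ) + 1 := add_le_add hd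
          (le_of_eq (edist_eq_one_iff_adj.mpr (adj _ _ _ _ (by omega))))
      _ ≤ k := by exact_mod_cast (by omega : (l + 3 - b) + (b - (l+3)) + 1 ≤ k)

/-- Potential function for lower bounds on distances. -/
def phi (l p : ℕ) : ℤ :=
  if p = 0 then 1 else if p = l + 5 then (l + 4 : ℤ) else (p : ℤ)

lemma phi_lipschitz : ∀ a b : Fin (l + 6), (F2Graph l).Adj a b →
    |phi l a.val - phi l b.val| ≤ 1 := by
  intro a b h
  rw [F2Graph, fromRel_adj] at h
  obtain ⟨hne, h⟩ := h
  have ha := a.isLt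
  have hb := b.isLt
  rw [abs_le]
  unfold phi
  constructor <;> (split_ifs <;> omega)

lemma lt_edist_of_gap (a b : ℕ) (ha : a < l + 6) (hb : b < l + 6) (k : ℕ)
    (h : (k : ℤ) + 1 ≤ phi l a - phi l b ∨ (k : ℤ) + 1 ≤ phi l b - phi l a) :
    (k : ℕ∞) < (F2Graph l).edist ⟨a, ha⟩ ⟨b, hb⟩ := by
  have h2 : ((k + 1 : ℕ) : ℕ∞) ≤ (F2Graph l).edist ⟨a, ha⟩ ⟨b, hb⟩ := by
    apply le_edist_of_lipschitz (fun i : Fin (l+6) => phi l i.val) (fun x y hxy => phi_lipschitz x y hxy)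
    rcases h with h | h
    · exact le_abs.mpr (Or.inl (by push_cast; linarith))
    · refine le_abs.mpr (Or.inr ?_); push_cast; linarith
  exact lt_of_lt_of_le (ENat.coe_lt_coe.mpr (Nat.lt_succ_self k)) h2

lemma lt_edist_of_not_adj (a b : ℕ) (ha : a < l + 6) (hb : b < l + 6)
    (h : (a + 2 ≤ b ∨ b + 2 ≤ a ∨ (a = l + 4 ∧ b = l + 5) ∨ (b = l + 4 ∧ a = l + 5)) ∧
      ¬(a = 0 ∧ b = 2) ∧ ¬(b = 0 ∧ a = 2) ∧
      ¬(a = l + 3 ∧ b = l + 5) ∧ ¬(b = l + 3 ∧ a = l + 5)) :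
    (1 : ℕ∞) < (F2Graph l).edist ⟨a, ha⟩ ⟨b, hb⟩ := by
  refine lt_of_lt_of_le (by norm_num : (1:ℕ∞) < 2)
    (two_le_edist_of_not_adj (by simp only [ne_eq, Fin.mk.injEq]; omega) ?_)
  rw [F2Graph, fromRel_adj]
  rintro ⟨-, hr⟩
  simp only [] at hr
  omega

end F2X


namespace F2X
def pat (p : ℕ) : ℕ := if p % 4 = 2 then 3 else if p % 4 = 0 then 2 else 1

variable {l : ℕ} {c : Fin (l + 6) → ℕ}

lemma EX (hc : IsPackingColoring (F2Graph l) 3 c) (a b m : ℕ) (ha : a < l + 6)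
    (hb : b < l + 6) (hne : a ≠ b) (h1 : c ⟨a, ha⟩ = m) (h2 : c ⟨b, hb⟩ = m)
    (hcond : (a ≤ b ∧ b ≤ a + m ∧ b ≤ l + 4) ∨ (b ≤ a ∧ a ≤ b + m ∧ a ≤ l + 4) ∨
      (a = 0 ∧ 2 ≤ b ∧ b ≤ l + 4 ∧ b ≤ m + 1) ∨
      (b = 0 ∧ 2 ≤ a ∧ a ≤ l + 4 ∧ a ≤ m + 1) ∨
      (b = l + 5 ∧ a ≤ l + 4 ∧ (l + 3 - a) + (a - (l + 3)) + 1 ≤ m) ∨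
      (a = l + 5 ∧ b ≤ l + 4 ∧ (l + 3 - b) + (b - (l + 3)) + 1 ≤ m)) : False := by
  have hlt := hc.2 ⟨a, ha⟩ ⟨b, hb⟩ (by simp only [ne_eq, Fin.mk.injEq]; omega)
    (h1.trans h2.symm)
  rw [h1] at hlt
  exact absurd (F2X.edist_le_of a b m ha hb hcond) (not_le.mpr hlt)

set_option maxHeartbeats 1600000 in
lemma step (hc : IsPackingColoring (F2Graph l) 3 c) (p : ℕ) (hp : p < l + 6)
    (hp6 : 6 ≤ p) (hp3 : p ≤ l + 3) (hl4 : l % 4 = 2)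
    (hq1 : p - 1 < l + 6) (hq2 : p - 2 < l + 6) (hq3 : p - 3 < l + 6)
    (hv1 : c ⟨p - 1, hq1⟩ = pat (p - 1)) (hv2 : c ⟨p - 2, hq2⟩ = pat (p - 2))
    (hv3 : c ⟨p - 3, hq3⟩ = pat (p - 3)) :
    c ⟨p, hp⟩ = pat p := by
  have hBp := hc.1 ⟨p, hp⟩
  rcases (by omega : p % 4 = 0 ∨ p % 4 = 1 ∨ p % 4 = 2 ∨ p % 4 = 3) with hm | hm | hm | hm
  · rw [show pat (p-1) = 1 by unfold pat; split_ifs <;> omega] at hv1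
    rw [show pat (p-2) = 3 by unfold pat; split_ifs <;> omega] at hv2
    rw [show pat p = 2 by unfold pat; split_ifs <;> omega]
    rcases (by omega : c ⟨p, hp⟩ = 1 ∨ c ⟨p, hp⟩ = 2 ∨ c ⟨p, hp⟩ = 3) with h | h | h
    · exact absurd (EX hc (p-1) p 1 hq1 hp (by omega) hv1 h (by omega)) not_false
    · exact h
    · exact absurd (EX hc (p-2) p 3 hq2 hp (by omega) hv2 h (by omega)) not_false
  · rw [show pat (p-1) = 2 by unfold pat; split_ifs <;> omega] at hv1
    rw [show pat (p-3) = 3 by unfold pat; split_ifs <;> omega] at hv3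
    rw [show pat p = 1 by unfold pat; split_ifs <;> omega]
    rcases (by omega : c ⟨p, hp⟩ = 1 ∨ c ⟨p, hp⟩ = 2 ∨ c ⟨p, hp⟩ = 3) with h | h | h
    · exact h
    · exact absurd (EX hc (p-1) p 2 hq1 hp (by omega) hv1 h (by omega)) not_false
    · exact absurd (EX hc (p-3) p 3 hq3 hp (by omega) hv3 h (by omega)) not_false
  · rw [show pat (p-1) = 1 by unfold pat; split_ifs <;> omega] at hv1
    rw [show pat (p-2) = 2 by unfold pat; split_ifs <;> omega] at hv2
    rw [show pat p = 3 by unfold pat; split_ifs <;> omega]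
    rcases (by omega : c ⟨p, hp⟩ = 1 ∨ c ⟨p, hp⟩ = 2 ∨ c ⟨p, hp⟩ = 3) with h | h | h
    · exact absurd (EX hc (p-1) p 1 hq1 hp (by omega) hv1 h (by omega)) not_false
    · exact absurd (EX hc (p-2) p 2 hq2 hp (by omega) hv2 h (by omega)) not_false
    · exact h
  · rw [show pat (p-1) = 3 by unfold pat; split_ifs <;> omega] at hv1
    rw [show pat p = 1 by unfold pat; split_ifs <;> omega]
    rcases (by omega : c ⟨p, hp⟩ = 1 ∨ c ⟨p, hp⟩ = 2 ∨ c ⟨p, hp⟩ = 3) with h | h | h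
    · exact h
    · exfalso
      have hpl : p ≤ l + 1 := by omega
      have hr1 : p + 1 < l + 6 := by omega
      have hr2 : p + 2 < l + 6 := by omega
      have hB1 := hc.1 (⟨p+1, hr1⟩ : Fin (l+6))
      have hB2 := hc.1 (⟨p+2, hr2⟩ : Fin (l+6))
      have hw1 : c ⟨p+1, hr1⟩ = 1 := by
        rcases (by omega : c ⟨p+1, hr1⟩ = 1 ∨ c ⟨p+1, hr1⟩ = 2 ∨ c ⟨p+1, hr1⟩ = 3)
          with hw | hw | hw
        · exact hw
        · exact absurd (EX hc p (p+1) 2 hp hr1 (by omega) h hw (by omega)) not_false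
        · exact absurd (EX hc (p-1) (p+1) 3 hq1 hr1 (by omega) hv1 hw (by omega)) not_false
      rcases (by omega : c ⟨p+2, hr2⟩ = 1 ∨ c ⟨p+2, hr2⟩ = 2 ∨ c ⟨p+2, hr2⟩ = 3)
        with hw | hw | hw
      · exact EX hc (p+1) (p+2) 1 hr1 hr2 (by omega) hw1 hw (by omega)
      · exact EX hc p (p+2) 2 hp hr2 (by omega) h hw (by omega)
      · exact EX hc (p-1) (p+2) 3 hq1 hr2 (by omega) hv1 hw (by omega)
    · exact absurd (EX hc (p-1) p 3 hq1 hp (by omega) hv1 h (by omega)) not_false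


set_option maxHeartbeats 1600000 in
lemma tri (hc : IsPackingColoring (F2Graph l) 3 c)
    (h0 : (0:ℕ) < l + 6) (h1 : (1:ℕ) < l + 6) (h2 : (2:ℕ) < l + 6) (h3 : (3:ℕ) < l + 6) :
    c ⟨2, h2⟩ = 3 ∧ c ⟨3, h3⟩ = 1 := by
  have h4 : (4:ℕ) < l + 6 := by omega
  have hB0 := hc.1 ⟨0, h0⟩; have hB1 := hc.1 ⟨1, h1⟩; have hB2 := hc.1 ⟨2, h2⟩
  have hB3 := hc.1 ⟨3, h3⟩; have hB4 := hc.1 ⟨4, h4⟩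
  have hne01 : c ⟨0, h0⟩ ≠ c ⟨1, h1⟩ := fun h => EX hc 0 1 _ h0 h1 (by omega) h rfl (by omega)
  have hne02 : c ⟨0, h0⟩ ≠ c ⟨2, h2⟩ := fun h => EX hc 0 2 _ h0 h2 (by omega) h rfl (by omega)
  have hne12 : c ⟨1, h1⟩ ≠ c ⟨2, h2⟩ := fun h => EX hc 1 2 _ h1 h2 (by omega) h rfl (by omega)
  have hc2 : c ⟨2, h2⟩ = 3 := by
    by_contra hx
    have h3cases : c ⟨3, h3⟩ = 1 ∨ c ⟨3, h3⟩ = 2 ∨ c ⟨3, h3⟩ = 3 := by omega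
    rcases (by omega : c ⟨2, h2⟩ = 1 ∨ c ⟨2, h2⟩ = 2) with hx2 | hx2
    · have ht2 : c ⟨0, h0⟩ = 2 ∨ c ⟨1, h1⟩ = 2 := by omega
      have ht3 : c ⟨0, h0⟩ = 3 ∨ c ⟨1, h1⟩ = 3 := by omega
      rcases h3cases with h | h | h
      · exact EX hc 2 3 1 h2 h3 (by omega) hx2 h (by omega)
      · rcases ht2 with ht | ht
        · exact EX hc 0 3 2 h0 h3 (by omega) ht h (by omega)
        · exact EX hc 1 3 2 h1 h3 (by omega) ht h (by omega)
      · rcases ht3 with ht | ht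
        · exact EX hc 0 3 3 h0 h3 (by omega) ht h (by omega)
        · exact EX hc 1 3 3 h1 h3 (by omega) ht h (by omega)
    · have ht3 : c ⟨0, h0⟩ = 3 ∨ c ⟨1, h1⟩ = 3 := by omega
      have hc3 : c ⟨3, h3⟩ = 1 := by
        rcases h3cases with h | h | h
        · exact h
        · exact absurd (EX hc 2 3 2 h2 h3 (by omega) hx2 h (by omega)) not_false
        · rcases ht3 with ht | ht
          · exact absurd (EX hc 0 3 3 h0 h3 (by omega) ht h (by omega)) not_false
          · exact absurd (EX hc 1 3 3 h1 h3 (by omega) ht h (by omega)) not_false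
      rcases (by omega : c ⟨4, h4⟩ = 1 ∨ c ⟨4, h4⟩ = 2 ∨ c ⟨4, h4⟩ = 3) with h | h | h
      · exact EX hc 3 4 1 h3 h4 (by omega) hc3 h (by omega)
      · exact EX hc 2 4 2 h2 h4 (by omega) hx2 h (by omega)
      · rcases ht3 with ht | ht
        · exact EX hc 0 4 3 h0 h4 (by omega) ht h (by omega)
        · exact EX hc 1 4 3 h1 h4 (by omega) ht h (by omega)
  refine ⟨hc2, ?_⟩
  have ht2 : c ⟨0, h0⟩ = 2 ∨ c ⟨1, h1⟩ = 2 := by omega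
  rcases (by omega : c ⟨3, h3⟩ = 1 ∨ c ⟨3, h3⟩ = 2 ∨ c ⟨3, h3⟩ = 3) with h | h | h
  · exact h
  · rcases ht2 with ht | ht
    · exact absurd (EX hc 0 3 2 h0 h3 (by omega) ht h (by omega)) not_false
    · exact absurd (EX hc 1 3 2 h1 h3 (by omega) ht h (by omega)) not_false
  · exact absurd (EX hc 2 3 3 h2 h3 (by omega) hc2 h (by omega)) not_false

set_option maxHeartbeats 1600000 in
lemma no_three_zero (c : Fin 6 → ℕ) (hc : IsPackingColoring (F2Graph 0) 3 c) : False := by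
  have h2 : (2:ℕ) < 0 + 6 := by omega
  have h3 : (3:ℕ) < 0 + 6 := by omega
  have h4 : (4:ℕ) < 0 + 6 := by omega
  have h5 : (5:ℕ) < 0 + 6 := by omega
  obtain ⟨hc2, hc3⟩ := tri hc (by omega) (by omega) h2 h3
  have hB4 := hc.1 ⟨4, h4⟩; have hB5 := hc.1 ⟨5, h5⟩
  have hc4 : c ⟨4, h4⟩ = 2 := by
    rcases (by omega : c ⟨4, h4⟩ = 1 ∨ c ⟨4, h4⟩ = 2 ∨ c ⟨4, h4⟩ = 3) with h | h | h
    · exact absurd (EX hc 3 4 1 h3 h4 (by omega) hc3 h (by omega)) not_false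
    · exact h
    · exact absurd (EX hc 2 4 3 h2 h4 (by omega) hc2 h (by omega)) not_false
  have hc5 : c ⟨5, h5⟩ = 2 := by
    rcases (by omega : c ⟨5, h5⟩ = 1 ∨ c ⟨5, h5⟩ = 2 ∨ c ⟨5, h5⟩ = 3) with h | h | h
    · exact absurd (EX hc 3 5 1 h3 h5 (by omega) hc3 h (by omega)) not_false
    · exact h
    · exact absurd (EX hc 2 5 3 h2 h5 (by omega) hc2 h (by omega)) not_false
  exact EX hc 4 5 2 h4 h5 (by omega) hc4 hc5 (by omega)

set_option maxHeartbeats 1600000 in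
lemma no_three_mod (hl4 : l % 4 = 2) (hc : IsPackingColoring (F2Graph l) 3 c) : False := by
  have h2 : (2:ℕ) < l + 6 := by omega
  have h3 : (3:ℕ) < l + 6 := by omega
  have h4 : (4:ℕ) < l + 6 := by omega
  have h5 : (5:ℕ) < l + 6 := by omega
  obtain ⟨hc2, hc3⟩ := tri hc (by omega) (by omega) h2 h3
  have hB4 := hc.1 ⟨4, h4⟩; have hB5 := hc.1 ⟨5, h5⟩
  have hl2 : 2 ≤ l := by omega
  have hc4 : c ⟨4, h4⟩ = 2 := by
    rcases (by omega : c ⟨4, h4⟩ = 1 ∨ c ⟨4, h4⟩ = 2 ∨ c ⟨4, h4⟩ = 3) with h | h | h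
    · exact absurd (EX hc 3 4 1 h3 h4 (by omega) hc3 h (by omega)) not_false
    · exact h
    · exact absurd (EX hc 2 4 3 h2 h4 (by omega) hc2 h (by omega)) not_false
  have hc5 : c ⟨5, h5⟩ = 1 := by
    rcases (by omega : c ⟨5, h5⟩ = 1 ∨ c ⟨5, h5⟩ = 2 ∨ c ⟨5, h5⟩ = 3) with h | h | h
    · exact h
    · exact absurd (EX hc 4 5 2 h4 h5 (by omega) hc4 h (by omega)) not_false
    · exact absurd (EX hc 2 5 3 h2 h5 (by omega) hc2 h (by omega)) not_false
  have key : ∀ p, ∀ (hp : p < l + 6), 2 ≤ p → p ≤ l + 3 → c ⟨p, hp⟩ = pat p := by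
    intro p
    induction p using Nat.strong_induction_on with
    | _ p ih =>
      intro hp hp2 hp3
      rcases (by omega : p = 2 ∨ p = 3 ∨ p = 4 ∨ p = 5 ∨ 6 ≤ p) with rfl | rfl | rfl | rfl | hp6
      · exact hc2.trans (by unfold pat; norm_num)
      · exact hc3.trans (by unfold pat; norm_num)
      · exact hc4.trans (by unfold pat; norm_num)
      · exact hc5.trans (by unfold pat; norm_num)
      exact step hc p hp hp6 hp3 hl4 (by omega) (by omega) (by omega)
        (ih (p-1) (by omega) (by omega) (by omega) (by omega))
        (ih (p-2) (by omega) (by omega) (by omega) (by omega))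
        (ih (p-3) (by omega) (by omega) (by omega) (by omega))
  have hL2 : l + 2 < l + 6 := by omega
  have hL3 : l + 3 < l + 6 := by omega
  have hL4 : l + 4 < l + 6 := by omega
  have hL5 : l + 5 < l + 6 := by omega
  have hvL3 : c ⟨l+3, hL3⟩ = 1 := by
    have := key (l+3) hL3 (by omega) (by omega)
    rwa [show pat (l+3) = 1 by unfold pat; split_ifs <;> omega] at this
  have hvL2 : c ⟨l+2, hL2⟩ = 2 := by
    have := key (l+2) hL2 (by omega) (by omega)
    rwa [show pat (l+2) = 2 by unfold pat; split_ifs <;> omega] at this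
  have hBL4 := hc.1 ⟨l+4, hL4⟩
  have hBL5 := hc.1 ⟨l+5, hL5⟩
  have hvL4 : c ⟨l+4, hL4⟩ = 3 := by
    rcases (by omega : c ⟨l+4, hL4⟩ = 1 ∨ c ⟨l+4, hL4⟩ = 2 ∨ c ⟨l+4, hL4⟩ = 3) with h | h | h
    · exact absurd (EX hc (l+3) (l+4) 1 hL3 hL4 (by omega) hvL3 h (by omega)) not_false
    · exact absurd (EX hc (l+2) (l+4) 2 hL2 hL4 (by omega) hvL2 h (by omega)) not_false
    · exact h
  have hvL5 : c ⟨l+5, hL5⟩ = 3 := by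
    rcases (by omega : c ⟨l+5, hL5⟩ = 1 ∨ c ⟨l+5, hL5⟩ = 2 ∨ c ⟨l+5, hL5⟩ = 3) with h | h | h
    · exact absurd (EX hc (l+3) (l+5) 1 hL3 hL5 (by omega) hvL3 h (by omega)) not_false
    · exact absurd (EX hc (l+2) (l+5) 2 hL2 hL5 (by omega) hvL2 h (by omega)) not_false
    · exact h
  exact EX hc (l+4) (l+5) 3 hL4 hL5 (by omega) hvL4 hvL5 (by omega)

lemma no_three (hl : l = 0 ∨ l % 4 = 2) (hc : IsPackingColoring (F2Graph l) 3 c) : False := by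
  rcases hl with rfl | hl4
  · exact no_three_zero c hc
  · exact no_three_mod hl4 hc

/-- the 4-packing coloring of the whole graph -/
def c4 (l p : ℕ) : ℕ :=
  if p = 0 then 3 else if p = 1 then 4 else if l + 4 ≤ p then 1
  else if (p - 2) % 4 = 1 then 2 else if (p - 2) % 4 = 3 then 3 else 1

/-- left pattern -/
def LP (p : ℕ) : ℕ := if p % 4 = 2 then 3 else if p % 4 = 0 then 2 else 1

/-- right pattern -/
def RP (l p : ℕ) : ℕ :=
  if l + 4 ≤ p then 1 else if p % 4 = 1 then 2 else if p % 4 = 3 then 3 else 1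

/-- 3-packing colorings of the vertex-deleted graphs, `l % 4 = 2` case; `w` is deleted -/
def cdel (l w p : ℕ) : ℕ :=
  if w ≤ 1 then (if p ≤ 1 then 2 else RP l p)
  else if w = 2 then (if p = 0 then 1 else if p = 1 then 2 else RP l p)
  else if w ≤ l + 1 then
    (if p = 0 then 1 else if p = 1 then 2 else if p < w then LP p else RP l p)
  else if w = l + 2 then (if p = 0 then 1 else if p = 1 then 2 else if p ≤ l + 1 then LP p
    else if p = l + 3 then 1 else if p = l + 4 then 2 else 3)
  else if w = l + 3 then
    (if p = 0 then 1 else if p = 1 then 2 else if l + 4 ≤ p then 1 else LP p)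
  else (if p = 0 then 1 else if p = 1 then 2 else if l + 4 ≤ p then 3 else LP p)

/-- 3-packing colorings of the vertex-deleted graphs, `l = 0` case -/
def cdel0 (w p : ℕ) : ℕ :=
  if w ≤ 1 then (if p ≤ 1 then 3 else if p = 2 then 1 else if p = 3 then 2 else 1)
  else if w = 2 then
    (if p = 0 then 1 else if p = 1 then 2 else if p = 3 then 1 else if p = 4 then 2 else 3)
  else if w = 3 then (if p = 0 then 1 else if p = 1 then 2 else if p = 2 then 3 else 1)
  else (if p = 0 then 1 else if p = 1 then 2 else if p = 2 then 3 else if p = 3 then 1 else 2)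

set_option maxHeartbeats 1600000 in
lemma c4_valid {l : ℕ} (hle : l % 2 = 0) (a b : ℕ) (ha : a < l + 6) (hb : b < l + 6)
    (hne : a ≠ b) (heq : c4 l a = c4 l b) :
    ((c4 l a : ℕ) : ℕ∞) < (F2Graph l).edist ⟨a, ha⟩ ⟨b, hb⟩ := by
  have hbv := heq.symm.trans (rfl : c4 l a = c4 l a)
  rcases (by unfold c4; split_ifs <;> omega :
      c4 l a = 1 ∨ c4 l a = 2 ∨ c4 l a = 3 ∨ c4 l a = 4) with h | h | h | h
  all_goals (rw [heq] at h; have hav := heq.trans h; rw [hav])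
  · exact_mod_cast lt_edist_of_not_adj a b ha hb
      (by unfold c4 at hav h; split_ifs at hav h <;> omega)
  · exact_mod_cast lt_edist_of_gap a b ha hb 2
      (by unfold c4 at hav h; unfold phi; split_ifs at hav h ⊢ <;> omega)
  · exact_mod_cast lt_edist_of_gap a b ha hb 3
      (by unfold c4 at hav h; unfold phi; split_ifs at hav h ⊢ <;> omega)
  · exfalso; unfold c4 at hav h; split_ifs at hav h <;> omega



set_option maxHeartbeats 1600000 in
lemma cdel_validA {l : ℕ} (hl4 : l % 4 = 2) (w : ℕ) (hw : w < l + 6) (hr : w ≤ 1)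
    (a b : ℕ) (ha : a < l + 6) (hb : b < l + 6) (hne : a ≠ b)
    (haw : a ≠ w) (hbw : b ≠ w) (heq : cdel l w a = cdel l w b) :
    ((cdel l w a : ℕ) : ℕ∞) < (F2Graph l).edist ⟨a, ha⟩ ⟨b, hb⟩ := by
  have e : ∀ p, cdel l w p = (if p ≤ 1 then 2 else RP l p) := by
    intro p; unfold cdel; rw [if_pos hr]
  rw [e a, e b] at heq
  rw [e a]
  rcases (by simp only [LP, RP]; split_ifs <;> omega :
      ((if a ≤ 1 then 2 else RP l a) : ℕ) = 1 ∨
      ((if a ≤ 1 then 2 else RP l a) : ℕ) = 2 ∨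
      ((if a ≤ 1 then 2 else RP l a) : ℕ) = 3) with h | h | h
  all_goals (rw [heq] at h; have hav := heq.trans h; rw [hav])
  · have Ha : (2 ≤ a ∧ a ≤ l+2 ∧ a % 2 = 0) ∨ l+4 ≤ a := by simp only [LP, RP] at hav; split_ifs at hav <;> omega
    have Hb : (2 ≤ b ∧ b ≤ l+2 ∧ b % 2 = 0) ∨ l+4 ≤ b := by simp only [LP, RP] at h; split_ifs at h <;> omega
    exact_mod_cast lt_edist_of_not_adj a b ha hb (by omega)
  · have Ha : a ≤ 1 ∨ (a % 4 = 1 ∧ 5 ≤ a ∧ a ≤ l+3) := by simp only [LP, RP] at hav; split_ifs at hav <;> omega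
    have Hb : b ≤ 1 ∨ (b % 4 = 1 ∧ 5 ≤ b ∧ b ≤ l+3) := by simp only [LP, RP] at h; split_ifs at h <;> omega
    exact_mod_cast lt_edist_of_gap a b ha hb 2 (by unfold phi; split_ifs <;> omega)
  · have Ha : a % 4 = 3 ∧ 3 ≤ a ∧ a ≤ l+1 := by simp only [LP, RP] at hav; split_ifs at hav <;> omega
    have Hb : b % 4 = 3 ∧ 3 ≤ b ∧ b ≤ l+1 := by simp only [LP, RP] at h; split_ifs at h <;> omega
    exact_mod_cast lt_edist_of_gap a b ha hb 3 (by unfold phi; split_ifs <;> omega)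

set_option maxHeartbeats 1600000 in
lemma cdel_validB {l : ℕ} (hl4 : l % 4 = 2) (w : ℕ) (hw : w < l + 6) (hr : w = 2)
    (a b : ℕ) (ha : a < l + 6) (hb : b < l + 6) (hne : a ≠ b)
    (haw : a ≠ w) (hbw : b ≠ w) (heq : cdel l w a = cdel l w b) :
    ((cdel l w a : ℕ) : ℕ∞) < (F2Graph l).edist ⟨a, ha⟩ ⟨b, hb⟩ := by
  have e : ∀ p, cdel l w p = (if p = 0 then 1 else if p = 1 then 2 else RP l p) := by
    intro p; unfold cdel; rw [if_neg (by omega), if_pos hr]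
  rw [e a, e b] at heq
  rw [e a]
  rcases (by simp only [LP, RP]; split_ifs <;> omega :
      ((if a = 0 then 1 else if a = 1 then 2 else RP l a) : ℕ) = 1 ∨
      ((if a = 0 then 1 else if a = 1 then 2 else RP l a) : ℕ) = 2 ∨
      ((if a = 0 then 1 else if a = 1 then 2 else RP l a) : ℕ) = 3) with h | h | h
  all_goals (rw [heq] at h; have hav := heq.trans h; rw [hav])
  · have Ha : a = 0 ∨ (4 ≤ a ∧ a ≤ l+2 ∧ a % 2 = 0) ∨ l+4 ≤ a := by simp only [LP, RP] at hav; split_ifs at hav <;> omega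
    have Hb : b = 0 ∨ (4 ≤ b ∧ b ≤ l+2 ∧ b % 2 = 0) ∨ l+4 ≤ b := by simp only [LP, RP] at h; split_ifs at h <;> omega
    exact_mod_cast lt_edist_of_not_adj a b ha hb (by omega)
  · have Ha : a = 1 ∨ (a % 4 = 1 ∧ 5 ≤ a ∧ a ≤ l+3) := by simp only [LP, RP] at hav; split_ifs at hav <;> omega
    have Hb : b = 1 ∨ (b % 4 = 1 ∧ 5 ≤ b ∧ b ≤ l+3) := by simp only [LP, RP] at h; split_ifs at h <;> omega
    exact_mod_cast lt_edist_of_gap a b ha hb 2 (by unfold phi; split_ifs <;> omega)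
  · have Ha : a % 4 = 3 ∧ 3 ≤ a ∧ a ≤ l+1 := by simp only [LP, RP] at hav; split_ifs at hav <;> omega
    have Hb : b % 4 = 3 ∧ 3 ≤ b ∧ b ≤ l+1 := by simp only [LP, RP] at h; split_ifs at h <;> omega
    exact_mod_cast lt_edist_of_gap a b ha hb 3 (by unfold phi; split_ifs <;> omega)

set_option maxHeartbeats 1600000 in
lemma cdel_validC {l : ℕ} (hl4 : l % 4 = 2) (w : ℕ) (hw : w < l + 6) (hr1 : 3 ≤ w) (hr2 : w ≤ l+1)
    (a b : ℕ) (ha : a < l + 6) (hb : b < l + 6) (hne : a ≠ b)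
    (haw : a ≠ w) (hbw : b ≠ w) (heq : cdel l w a = cdel l w b) :
    ((cdel l w a : ℕ) : ℕ∞) < (F2Graph l).edist ⟨a, ha⟩ ⟨b, hb⟩ := by
  have e : ∀ p, cdel l w p = (if p = 0 then 1 else if p = 1 then 2 else if p < w then LP p else RP l p) := by
    intro p; unfold cdel; rw [if_neg (by omega), if_neg (by omega), if_pos hr2]
  rw [e a, e b] at heq
  rw [e a]
  rcases (by simp only [LP, RP]; split_ifs <;> omega :
      ((if a = 0 then 1 else if a = 1 then 2 else if a < w then LP a else RP l a) : ℕ) = 1 ∨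
      ((if a = 0 then 1 else if a = 1 then 2 else if a < w then LP a else RP l a) : ℕ) = 2 ∨
      ((if a = 0 then 1 else if a = 1 then 2 else if a < w then LP a else RP l a) : ℕ) = 3) with h | h | h
  all_goals (rw [heq] at h; have hav := heq.trans h; rw [hav])
  · have Ha : a = 0 ∨ (a % 2 = 1 ∧ 3 ≤ a ∧ a < w) ∨ (a % 2 = 0 ∧ w < a ∧ a ≤ l+2) ∨ l+4 ≤ a := by simp only [LP, RP] at hav; split_ifs at hav <;> omega
    have Hb : b = 0 ∨ (b % 2 = 1 ∧ 3 ≤ b ∧ b < w) ∨ (b % 2 = 0 ∧ w < b ∧ b ≤ l+2) ∨ l+4 ≤ b := by simp only [LP, RP] at h; split_ifs at h <;> omega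
    exact_mod_cast lt_edist_of_not_adj a b ha hb (by omega)
  · have Ha : a = 1 ∨ (a % 4 = 0 ∧ 4 ≤ a ∧ a < w) ∨ (a % 4 = 1 ∧ w < a ∧ a ≤ l+3) := by simp only [LP, RP] at hav; split_ifs at hav <;> omega
    have Hb : b = 1 ∨ (b % 4 = 0 ∧ 4 ≤ b ∧ b < w) ∨ (b % 4 = 1 ∧ w < b ∧ b ≤ l+3) := by simp only [LP, RP] at h; split_ifs at h <;> omega
    exact_mod_cast lt_edist_of_gap a b ha hb 2 (by unfold phi; split_ifs <;> omega)
  · have Ha : (a % 4 = 2 ∧ 2 ≤ a ∧ a < w) ∨ (a % 4 = 3 ∧ w < a ∧ a ≤ l+3) := by simp only [LP, RP] at hav; split_ifs at hav <;> omega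
    have Hb : (b % 4 = 2 ∧ 2 ≤ b ∧ b < w) ∨ (b % 4 = 3 ∧ w < b ∧ b ≤ l+3) := by simp only [LP, RP] at h; split_ifs at h <;> omega
    exact_mod_cast lt_edist_of_gap a b ha hb 3 (by unfold phi; split_ifs <;> omega)

set_option maxHeartbeats 1600000 in
lemma cdel_validD {l : ℕ} (hl4 : l % 4 = 2) (w : ℕ) (hw : w < l + 6) (hr : w = l+2)
    (a b : ℕ) (ha : a < l + 6) (hb : b < l + 6) (hne : a ≠ b)
    (haw : a ≠ w) (hbw : b ≠ w) (heq : cdel l w a = cdel l w b) :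
    ((cdel l w a : ℕ) : ℕ∞) < (F2Graph l).edist ⟨a, ha⟩ ⟨b, hb⟩ := by
  have e : ∀ p, cdel l w p = (if p = 0 then 1 else if p = 1 then 2 else if p ≤ l+1 then LP p else if p = l+3 then 1 else if p = l+4 then 2 else 3) := by
    intro p; unfold cdel; rw [if_neg (by omega), if_neg (by omega), if_neg (by omega), if_pos hr]
  rw [e a, e b] at heq
  rw [e a]
  rcases (by simp only [LP, RP]; split_ifs <;> omega :
      ((if a = 0 then 1 else if a = 1 then 2 else if a ≤ l+1 then LP a else if a = l+3 then 1 else if a = l+4 then 2 else 3) : ℕ) = 1 ∨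
      ((if a = 0 then 1 else if a = 1 then 2 else if a ≤ l+1 then LP a else if a = l+3 then 1 else if a = l+4 then 2 else 3) : ℕ) = 2 ∨
      ((if a = 0 then 1 else if a = 1 then 2 else if a ≤ l+1 then LP a else if a = l+3 then 1 else if a = l+4 then 2 else 3) : ℕ) = 3) with h | h | h
  all_goals (rw [heq] at h; have hav := heq.trans h; rw [hav])
  · have Ha : a = 0 ∨ (a % 2 = 1 ∧ 3 ≤ a ∧ a ≤ l+1) ∨ a = l+3 := by simp only [LP, RP] at hav; split_ifs at hav <;> omega
    have Hb : b = 0 ∨ (b % 2 = 1 ∧ 3 ≤ b ∧ b ≤ l+1) ∨ b = l+3 := by simp only [LP, RP] at h; split_ifs at h <;> omega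
    exact_mod_cast lt_edist_of_not_adj a b ha hb (by omega)
  · have Ha : a = 1 ∨ (a % 4 = 0 ∧ 4 ≤ a ∧ a ≤ l+1) ∨ a = l+4 := by simp only [LP, RP] at hav; split_ifs at hav <;> omega
    have Hb : b = 1 ∨ (b % 4 = 0 ∧ 4 ≤ b ∧ b ≤ l+1) ∨ b = l+4 := by simp only [LP, RP] at h; split_ifs at h <;> omega
    exact_mod_cast lt_edist_of_gap a b ha hb 2 (by unfold phi; split_ifs <;> omega)
  · have Ha : (a % 4 = 2 ∧ 2 ≤ a ∧ a ≤ l+1) ∨ a = l+5 := by simp only [LP, RP] at hav; split_ifs at hav <;> omega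
    have Hb : (b % 4 = 2 ∧ 2 ≤ b ∧ b ≤ l+1) ∨ b = l+5 := by simp only [LP, RP] at h; split_ifs at h <;> omega
    exact_mod_cast lt_edist_of_gap a b ha hb 3 (by unfold phi; split_ifs <;> omega)

set_option maxHeartbeats 1600000 in
lemma cdel_validE {l : ℕ} (hl4 : l % 4 = 2) (w : ℕ) (hw : w < l + 6) (hr : w = l+3)
    (a b : ℕ) (ha : a < l + 6) (hb : b < l + 6) (hne : a ≠ b)
    (haw : a ≠ w) (hbw : b ≠ w) (heq : cdel l w a = cdel l w b) :
    ((cdel l w a : ℕ) : ℕ∞) < (F2Graph l).edist ⟨a, ha⟩ ⟨b, hb⟩ := by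
  have e : ∀ p, cdel l w p = (if p = 0 then 1 else if p = 1 then 2 else if l + 4 ≤ p then 1 else LP p) := by
    intro p; unfold cdel; rw [if_neg (by omega), if_neg (by omega), if_neg (by omega), if_neg (by omega), if_pos hr]
  rw [e a, e b] at heq
  rw [e a]
  rcases (by simp only [LP, RP]; split_ifs <;> omega :
      ((if a = 0 then 1 else if a = 1 then 2 else if l + 4 ≤ a then 1 else LP a) : ℕ) = 1 ∨
      ((if a = 0 then 1 else if a = 1 then 2 else if l + 4 ≤ a then 1 else LP a) : ℕ) = 2 ∨
      ((if a = 0 then 1 else if a = 1 then 2 else if l + 4 ≤ a then 1 else LP a) : ℕ) = 3) with h | h | h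
  all_goals (rw [heq] at h; have hav := heq.trans h; rw [hav])
  · have Ha : a = 0 ∨ (a % 2 = 1 ∧ 3 ≤ a ∧ a ≤ l+2) ∨ l+4 ≤ a := by simp only [LP, RP] at hav; split_ifs at hav <;> omega
    have Hb : b = 0 ∨ (b % 2 = 1 ∧ 3 ≤ b ∧ b ≤ l+2) ∨ l+4 ≤ b := by simp only [LP, RP] at h; split_ifs at h <;> omega
    exact_mod_cast lt_edist_of_not_adj a b ha hb (by omega)
  · have Ha : a = 1 ∨ (a % 4 = 0 ∧ 4 ≤ a ∧ a ≤ l+2) := by simp only [LP, RP] at hav; split_ifs at hav <;> omega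
    have Hb : b = 1 ∨ (b % 4 = 0 ∧ 4 ≤ b ∧ b ≤ l+2) := by simp only [LP, RP] at h; split_ifs at h <;> omega
    exact_mod_cast lt_edist_of_gap a b ha hb 2 (by unfold phi; split_ifs <;> omega)
  · have Ha : a % 4 = 2 ∧ 2 ≤ a ∧ a ≤ l+2 := by simp only [LP, RP] at hav; split_ifs at hav <;> omega
    have Hb : b % 4 = 2 ∧ 2 ≤ b ∧ b ≤ l+2 := by simp only [LP, RP] at h; split_ifs at h <;> omega
    exact_mod_cast lt_edist_of_gap a b ha hb 3 (by unfold phi; split_ifs <;> omega)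

set_option maxHeartbeats 1600000 in
lemma cdel_validF {l : ℕ} (hl4 : l % 4 = 2) (w : ℕ) (hw : w < l + 6) (hr : l+4 ≤ w)
    (a b : ℕ) (ha : a < l + 6) (hb : b < l + 6) (hne : a ≠ b)
    (haw : a ≠ w) (hbw : b ≠ w) (heq : cdel l w a = cdel l w b) :
    ((cdel l w a : ℕ) : ℕ∞) < (F2Graph l).edist ⟨a, ha⟩ ⟨b, hb⟩ := by
  have e : ∀ p, cdel l w p = (if p = 0 then 1 else if p = 1 then 2 else if l + 4 ≤ p then 3 else LP p) := by
    intro p; unfold cdel; rw [if_neg (by omega), if_neg (by omega), if_neg (by omega), if_neg (by omega), if_neg (by omega)]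
  rw [e a, e b] at heq
  rw [e a]
  rcases (by simp only [LP, RP]; split_ifs <;> omega :
      ((if a = 0 then 1 else if a = 1 then 2 else if l + 4 ≤ a then 3 else LP a) : ℕ) = 1 ∨
      ((if a = 0 then 1 else if a = 1 then 2 else if l + 4 ≤ a then 3 else LP a) : ℕ) = 2 ∨
      ((if a = 0 then 1 else if a = 1 then 2 else if l + 4 ≤ a then 3 else LP a) : ℕ) = 3) with h | h | h
  all_goals (rw [heq] at h; have hav := heq.trans h; rw [hav])
  · have Ha : a = 0 ∨ (a % 2 = 1 ∧ 3 ≤ a ∧ a ≤ l+3) := by simp only [LP, RP] at hav; split_ifs at hav <;> omega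
    have Hb : b = 0 ∨ (b % 2 = 1 ∧ 3 ≤ b ∧ b ≤ l+3) := by simp only [LP, RP] at h; split_ifs at h <;> omega
    exact_mod_cast lt_edist_of_not_adj a b ha hb (by omega)
  · have Ha : a = 1 ∨ (a % 4 = 0 ∧ 4 ≤ a ∧ a ≤ l+2) := by simp only [LP, RP] at hav; split_ifs at hav <;> omega
    have Hb : b = 1 ∨ (b % 4 = 0 ∧ 4 ≤ b ∧ b ≤ l+2) := by simp only [LP, RP] at h; split_ifs at h <;> omega
    exact_mod_cast lt_edist_of_gap a b ha hb 2 (by unfold phi; split_ifs <;> omega)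
  · have Ha : (a % 4 = 2 ∧ 2 ≤ a ∧ a ≤ l+3) ∨ l+4 ≤ a := by simp only [LP, RP] at hav; split_ifs at hav <;> omega
    have Hb : (b % 4 = 2 ∧ 2 ≤ b ∧ b ≤ l+3) ∨ l+4 ≤ b := by simp only [LP, RP] at h; split_ifs at h <;> omega
    exact_mod_cast lt_edist_of_gap a b ha hb 3 (by unfold phi; split_ifs <;> omega)

lemma cdel_valid {l : ℕ} (hl4 : l % 4 = 2) (w : ℕ) (hw : w < l + 6)
    (a b : ℕ) (ha : a < l + 6) (hb : b < l + 6) (hne : a ≠ b)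
    (haw : a ≠ w) (hbw : b ≠ w) (heq : cdel l w a = cdel l w b) :
    ((cdel l w a : ℕ) : ℕ∞) < (F2Graph l).edist ⟨a, ha⟩ ⟨b, hb⟩ := by
  rcases (by omega : w ≤ 1 ∨ w = 2 ∨ (3 ≤ w ∧ w ≤ l+1) ∨ w = l+2 ∨ w = l+3 ∨ l+4 ≤ w)
    with hr | hr | ⟨hr1, hr2⟩ | hr | hr | hr
  · exact cdel_validA hl4 w hw hr a b ha hb hne haw hbw heq
  · exact cdel_validB hl4 w hw hr a b ha hb hne haw hbw heq
  · exact cdel_validC hl4 w hw hr1 hr2 a b ha hb hne haw hbw heq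
  · exact cdel_validD hl4 w hw hr a b ha hb hne haw hbw heq
  · exact cdel_validE hl4 w hw hr a b ha hb hne haw hbw heq
  · exact cdel_validF hl4 w hw hr a b ha hb hne haw hbw heq


set_option maxHeartbeats 800000 in
lemma cdel0_valid (w : ℕ) (hw : w < 0 + 6) (a b : ℕ) (ha : a < 0 + 6) (hb : b < 0 + 6)
    (hne : a ≠ b) (haw : a ≠ w) (hbw : b ≠ w) (heq : cdel0 w a = cdel0 w b) :
    ((cdel0 w a : ℕ) : ℕ∞) < (F2Graph 0).edist ⟨a, ha⟩ ⟨b, hb⟩ := by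
  rcases (by unfold cdel0; split_ifs <;> omega :
      cdel0 w a = 1 ∨ cdel0 w a = 2 ∨ cdel0 w a = 3) with h | h | h
  all_goals (rw [heq] at h; have hav := heq.trans h; rw [hav])
  · have Ha : (w ≤ 1 ∧ (a = 2 ∨ a = 4 ∨ a = 5)) ∨ (w = 2 ∧ (a = 0 ∨ a = 3)) ∨
        (w = 3 ∧ (a = 0 ∨ a = 4 ∨ a = 5)) ∨ (4 ≤ w ∧ (a = 0 ∨ a = 3)) := by
      unfold cdel0 at hav; split_ifs at hav <;> omega
    have Hb : (w ≤ 1 ∧ (b = 2 ∨ b = 4 ∨ b = 5)) ∨ (w = 2 ∧ (b = 0 ∨ b = 3)) ∨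
        (w = 3 ∧ (b = 0 ∨ b = 4 ∨ b = 5)) ∨ (4 ≤ w ∧ (b = 0 ∨ b = 3)) := by
      unfold cdel0 at h; split_ifs at h <;> omega
    exact_mod_cast lt_edist_of_not_adj a b ha hb (by omega)
  · have Ha : (w ≤ 1 ∧ a = 3) ∨ (w = 2 ∧ (a = 1 ∨ a = 4)) ∨ (w = 3 ∧ a = 1) ∨
        (4 ≤ w ∧ (a = 1 ∨ a = 4 ∨ a = 5)) := by
      unfold cdel0 at hav; split_ifs at hav <;> omega
    have Hb : (w ≤ 1 ∧ b = 3) ∨ (w = 2 ∧ (b = 1 ∨ b = 4)) ∨ (w = 3 ∧ b = 1) ∨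
        (4 ≤ w ∧ (b = 1 ∨ b = 4 ∨ b = 5)) := by
      unfold cdel0 at h; split_ifs at h <;> omega
    exact_mod_cast lt_edist_of_gap a b ha hb 2 (by unfold phi; split_ifs <;> omega)
  · have Ha : (w ≤ 1 ∧ a ≤ 1) ∨ (w = 2 ∧ a = 5) ∨ (3 ≤ w ∧ a = 2) := by
      unfold cdel0 at hav; split_ifs at hav <;> omega
    have Hb : (w ≤ 1 ∧ b ≤ 1) ∨ (w = 2 ∧ b = 5) ∨ (3 ≤ w ∧ b = 2) := by
      unfold cdel0 at h; split_ifs at h <;> omega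
    exact_mod_cast lt_edist_of_gap a b ha hb 3 (by unfold phi; split_ifs <;> omega)

lemma pack4 {l : ℕ} (hle : l % 2 = 0) :
    IsPackingColoring (F2Graph l) 4 (fun v : Fin (l + 6) => c4 l v.val) := by
  constructor
  · intro v
    show 1 ≤ c4 l v.val ∧ c4 l v.val ≤ 4
    unfold c4; split_ifs <;> omega
  · intro u v huv heq
    exact c4_valid hle u.val v.val u.isLt v.isLt
      (fun hh => huv (Fin.val_injective hh)) heq

lemma packing_del {l : ℕ} (w : Fin (l + 6)) (f : ℕ → ℕ)
    (hbd : ∀ a, a < l + 6 → a ≠ w.val → 1 ≤ f a ∧ f a ≤ 3)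
    (h : ∀ a b (ha : a < l + 6) (hb' : b < l + 6), a ≠ b → a ≠ w.val → b ≠ w.val →
      f a = f b → ((f a : ℕ) : ℕ∞) < (F2Graph l).edist ⟨a, ha⟩ ⟨b, hb'⟩) :
    IsPackingColoring ((F2Graph l).induce ({w}ᶜ : Set (Fin (l + 6)))) 3
      (fun x => f x.val.val) := by
  constructor
  · intro x
    exact hbd x.val.val x.val.isLt (fun hh => x.property (Fin.val_injective hh))
  · intro u v huv heq
    have h1 : u.val.val ≠ v.val.val := fun hh => huv (Subtype.ext (Fin.val_injective hh))
    exact lt_of_lt_of_le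
      (h u.val.val v.val.val u.val.isLt v.val.isLt h1
        (fun hh => u.property (Fin.val_injective hh))
        (fun hh => v.property (Fin.val_injective hh)) heq)
      (edist_le_induce _ u v)

set_option maxHeartbeats 1600000 in
lemma del_coloring {l : ℕ} (hl : l = 0 ∨ l % 4 = 2) (w : Fin (l + 6)) :
    ∃ c, IsPackingColoring ((F2Graph l).induce ({w}ᶜ : Set (Fin (l + 6)))) 3 c := by
  rcases hl with rfl | hl4
  · exact ⟨fun x => cdel0 w.val x.val.val,
      packing_del w (cdel0 w.val) (fun a ha haw => by unfold cdel0; split_ifs <;> omega)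
        (fun a b ha hb hne haw hbw heq => cdel0_valid w.val w.isLt a b ha hb hne haw hbw heq)⟩
  · exact ⟨fun x => cdel l w.val x.val.val,
      packing_del w (cdel l w.val)
        (fun a ha haw => by unfold cdel LP RP; split_ifs <;> omega)
        (fun a b ha hb hne haw hbw heq =>
          cdel_valid hl4 w.val w.isLt a b ha hb hne haw hbw heq)⟩


end F2X

theorem F2_fourVertexCritical (l : ℕ) (hl : l = 0 ∨ l % 4 = 2) :
    FourVertexCritical (F2Graph l) := by
  have hle : l % 2 = 0 := by omega
  have mem4 : 4 ∈ {k | ∃ c : Fin (l + 6) → ℕ, IsPackingColoring (F2Graph l) k c} :=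
    ⟨fun v => F2X.c4 l v.val, F2X.pack4 hle⟩
  constructor
  · refine le_antisymm (Nat.sInf_le mem4) (le_csInf ⟨4, mem4⟩ ?_)
    rintro k ⟨ck, hck⟩
    by_contra hk
    push_neg at hk
    exact (F2X.no_three hl
      ⟨fun v => ⟨(hck.1 v).1, (hck.1 v).2.trans (by omega)⟩, hck.2⟩).elim
  · intro v
    obtain ⟨c, hc⟩ := F2X.del_coloring hl v
    have h3 : packingChromaticNumber ((F2Graph l).induce ({v}ᶜ : Set (Fin (l + 6)))) ≤ 3 :=
      Nat.sInf_le ⟨c, hc⟩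
    omega
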